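/- Let a > √3 and set c(a) = (9/8)(a + 1/a) and ℓ(a) = F_a(0,0) = (9/64)(a + 1/a)². Then the level set S = {(x,y) ∈ ℝ² : F_a(x,y) = ℓ(a)} is compact, contains the origin, and S \ {(0,0)} has exactly two connected components (the two lobes of the homoclinic figure eight), which are exchanged by the reflection (x,y) ↦ (-x,y). -/

import Mathlib

set_option maxHeartbeats 1000000


/-- `F_a`, the Casimir `K` restricted to the light-cone paraboloid `{H_a(M,1) = 0}` of the
reduced Fefferman Hamiltonian, in the coordinates `(M₁, M₂) = (x, y)`. -/
noncomputable def Fa (a : ℝ) (p : ℝ × ℝ) : ℝ :=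
  p.1 ^ 2 + p.2 ^ 2 + (1/9) * (a * p.1 ^ 2 + p.2 ^ 2 / a - (9/8) * (a + 1/a)) ^ 2

/-- For `a > √3`, the level set of `F_a` through the origin (at level
`ℓ(a) = F_a(0,0) = (9/64)(a+1/a)²`) is compact, contains the origin, and with the origin
removed has exactly two connected components -- the two lobes of the homoclinic figure
eight -- exchanged by the reflection `(x,y) ↦ (-x,y)`. -/
theorem Fa_figure_eight (a : ℝ) (ha : Real.sqrt 3 < a)
    (S : Set (ℝ × ℝ)) (hS : S = {p : ℝ × ℝ | Fa a p = (9/64) * (a + 1/a) ^ 2}) :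
    IsCompact S ∧ ((0, 0) : ℝ × ℝ) ∈ S ∧
    ∃ A B : Set (ℝ × ℝ),
      IsConnected A ∧ IsConnected B ∧ Disjoint A B ∧ A ∪ B = S \ {(0, 0)} ∧
      (∀ p ∈ S \ {((0 : ℝ), (0 : ℝ))},
        connectedComponentIn (S \ {(0, 0)}) p = A ∨
        connectedComponentIn (S \ {(0, 0)}) p = B) ∧
      (fun p : ℝ × ℝ => (-p.1, p.2)) '' A = B := by
  have ha0 : 0 < a := lt_of_le_of_lt (Real.sqrt_nonneg 3) ha
  have h3 : (3:ℝ) < a ^ 2 := by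
    nlinarith [Real.sq_sqrt (by norm_num : (0:ℝ) ≤ 3), Real.sqrt_nonneg 3]
  have hq : (0:ℝ) < 3 - 1/a^2 := by
    have h1 : 1/a^2 ≤ 1 := by
      rw [div_le_one (by positivity)]; nlinarith
    linarith
  have hp3 : (0:ℝ) < a^2 - 3 := by linarith
  -- the key algebraic description of S
  have hident : ∀ x y : ℝ, Fa a (x, y) - (9/64) * (a + 1/a) ^ 2 =
      (1/9) * ((a*x^2 + y^2/a)^2 - 9/4*((a^2-3)*x^2 - (3-1/a^2)*y^2)) := by
    intro x y
    unfold Fa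
    field_simp
    ring
  have key : ∀ x y : ℝ, ((x, y) ∈ S) ↔
      (a*x^2 + y^2/a)^2 = 9/4*((a^2-3)*x^2 - (3-1/a^2)*y^2) := by
    intro x y
    rw [hS]
    simp only [Set.mem_setOf_eq]
    constructor
    · intro h
      have h2 := hident x y
      rw [h, sub_self] at h2
      linarith
    · intro h
      have h2 := hident x y
      rw [h, sub_self, mul_zero] at h2
      linarith
  -- origin in S
  have horig : ((0,0) : ℝ × ℝ) ∈ S := by
    rw [key 0 0]; ring
  -- compactness
  have hFacont : Continuous (Fa a) := by
    unfold Fa; fun_prop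
  have hScl : IsClosed S := by
    rw [hS]; exact isClosed_eq hFacont continuous_const
  have hScomp : IsCompact S := by
    apply (isCompact_closedBall (0 : ℝ × ℝ) (Real.sqrt ((9/64) * (a + 1/a) ^ 2))).of_isClosed_subset hScl
    intro p hp
    rw [hS] at hp
    simp only [Set.mem_setOf_eq] at hp
    unfold Fa at hp
    have h1 : p.1^2 ≤ (9/64) * (a + 1/a) ^ 2 := by
      nlinarith [sq_nonneg p.2, sq_nonneg (a * p.1 ^ 2 + p.2 ^ 2 / a - 9/8 * (a + 1/a))]
    have h2 : p.2^2 ≤ (9/64) * (a + 1/a) ^ 2 := by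
      nlinarith [sq_nonneg p.1, sq_nonneg (a * p.1 ^ 2 + p.2 ^ 2 / a - 9/8 * (a + 1/a))]
    have e1 : |p.1| ≤ Real.sqrt ((9/64) * (a + 1/a) ^ 2) := by
      have := Real.sqrt_le_sqrt h1
      rwa [Real.sqrt_sq_eq_abs] at this
    have e2 : |p.2| ≤ Real.sqrt ((9/64) * (a + 1/a) ^ 2) := by
      have := Real.sqrt_le_sqrt h2
      rwa [Real.sqrt_sq_eq_abs] at this
    simp only [Metric.mem_closedBall, dist_zero_right, Prod.norm_def, Real.norm_eq_abs]
    exact max_le e1 e2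
  -- points of S off the origin have nonzero first coordinate
  have hx_ne : ∀ p ∈ S, p ≠ ((0:ℝ), (0:ℝ)) → p.1 ≠ 0 := by
    intro p hpS hp0 hx
    have hk := (key p.1 p.2).mp (by rwa [Prod.mk.eta])
    rw [hx] at hk
    have hy2 : p.2 ^ 2 = 0 := by nlinarith [sq_nonneg (p.2^2/a), sq_nonneg p.2]
    have hy : p.2 = 0 := by
      have := sq_eq_zero_iff.mp hy2
      exact this
    exact hp0 (Prod.ext hx hy)
  -- the parametrization of the right lobe
  set M : ℝ := Real.sqrt ((a^2-3)/(3-1/a^2)) with hM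
  set D : ℝ → ℝ := fun m => (a^2-3) - (3-1/a^2)*m^2 with hD
  set X : ℝ → ℝ := fun m => (3/2) * Real.sqrt (D m) / (a + m^2/a) with hX
  set φ : ℝ → ℝ × ℝ := fun m => (X m, m * X m) with hφ
  clear_value M D X φ
  have hden : ∀ m : ℝ, 0 < a + m^2/a := by intro m; positivity
  have hMpos : 0 < M := by
    rw [hM]; exact Real.sqrt_pos.mpr (by positivity)
  have hDpos : ∀ m ∈ Set.Ioo (-M) M, 0 < D m := by
    intro m hm
    have habs : |m| < M := abs_lt.mpr ⟨hm.1, hm.2⟩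
    rw [hM] at habs
    have hm2 : m^2 < (a^2-3)/(3-1/a^2) := by
      have := (Real.lt_sqrt (abs_nonneg m)).mp habs
      rwa [sq_abs] at this
    have := (lt_div_iff₀ hq).mp hm2
    simp only [hD]
    nlinarith
  have hXpos : ∀ m ∈ Set.Ioo (-M) M, 0 < X m := by
    intro m hm
    have hs := Real.sqrt_pos.mpr (hDpos m hm)
    simp only [hX]
    exact div_pos (mul_pos (by norm_num) hs) (hden m)
  have hX2 : ∀ m ∈ Set.Ioo (-M) M, (X m)^2 * (a + m^2/a)^2 = 9/4 * D m := by
    intro m hm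
    have h1 : X m * (a + m^2/a) = 3/2 * Real.sqrt (D m) := by
      simp only [hX]
      field_simp
    rw [← mul_pow, h1, mul_pow, Real.sq_sqrt (hDpos m hm).le]
    norm_num
  -- the right lobe
  set A : Set (ℝ × ℝ) := S ∩ {p : ℝ × ℝ | 0 < p.1} with hA
  have hmemA : ∀ m ∈ Set.Ioo (-M) M, φ m ∈ A := by
    intro m hm
    simp only [hφ]
    refine ⟨?_, ?_⟩
    · rw [key]
      have h2 := hX2 m hm
      simp only [hD] at h2
      linear_combination (X m)^2 * h2
    · exact hXpos m hm
  have hsurA : ∀ p ∈ A, ∃ m ∈ Set.Ioo (-M) M, φ m = p := by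
    intro p hpA
    obtain ⟨hpS, hx⟩ := hpA
    simp only [Set.mem_setOf_eq] at hx
    set x := p.1 with hxdef
    set y := p.2 with hydef
    have hk := (key x y).mp (by rwa [Prod.mk.eta])
    refine ⟨y / x, ?_, ?_⟩
    · -- membership in the interval
      have hQ : 0 < a*x^2 + y^2/a := by positivity
      have hRHS : 0 < (a^2-3)*x^2 - (3-1/a^2)*y^2 := by nlinarith
      have hDm : 0 < D (y/x) := by
        have hfs : D (y/x) * x^2 = (a^2-3)*x^2 - (3-1/a^2)*y^2 := by
          simp only [hD]
          field_simp
        nlinarith [sq_nonneg x, mul_pos hx hx, hRHS]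
      have hm2 : (y/x)^2 < (a^2-3)/(3-1/a^2) := by
        rw [lt_div_iff₀ hq]
        simp only [hD] at hDm
        nlinarith
      have habs : |y/x| < M := by
        rw [hM]
        exact (Real.lt_sqrt (abs_nonneg _)).mpr (by rwa [sq_abs])
      exact abs_lt.mp habs
    · -- φ (y/x) = p
      have hy : y = (y/x) * x := by field_simp
      have hsq : D (y/x) = (2/3 * x * (a + (y/x)^2/a))^2 := by
        simp only [hD]
        field_simp at hk ⊢
        linear_combination (-1) * hk
      have h1 : Real.sqrt (D (y/x)) = 2/3 * x * (a + (y/x)^2/a) := by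
        rw [hsq, Real.sqrt_sq (by positivity)]
      have hXx : X (y/x) = x := by
        simp only [hX]
        rw [h1]
        field_simp
      simp only [hφ, hXx]
      rw [← hy]
  have hAeq : A = φ '' Set.Ioo (-M) M := by
    apply Set.Subset.antisymm
    · intro p hp
      obtain ⟨m, hm, hφm⟩ := hsurA p hp
      exact ⟨m, hm, hφm⟩
    · rintro p ⟨m, hm, rfl⟩
      exact hmemA m hm
  have hφcont : Continuous φ := by
    have hXcont : Continuous X := by
      rw [hX]
      apply Continuous.div
      · exact continuous_const.mul (Real.continuous_sqrt.comp (by simp only [hD]; fun_prop))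
      · fun_prop
      · exact fun m => (hden m).ne'
    rw [hφ]
    exact Continuous.prodMk hXcont (continuous_id.mul hXcont)
  have hAconn : IsConnected A := by
    rw [hAeq]
    exact (isConnected_Ioo (by linarith)).image φ hφcont.continuousOn
  -- the reflection and the left lobe
  set σ : ℝ × ℝ → ℝ × ℝ := fun p => (-p.1, p.2) with hσ
  have hσcont : Continuous σ := by fun_prop
  have hσS : ∀ p : ℝ × ℝ, σ p ∈ S ↔ p ∈ S := by
    intro p
    simp only [hσ]
    rw [key, ← Prod.mk.eta (p := p), key]
    constructor <;> intro h <;> linear_combination h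
  set B : Set (ℝ × ℝ) := σ '' A with hB
  have hBconn : IsConnected B := hAconn.image σ hσcont.continuousOn
  have hBneg : ∀ p ∈ B, p.1 < 0 := by
    rintro p ⟨q, hq', rfl⟩
    simp only [hσ]
    exact neg_lt_zero.mpr hq'.2
  have hdisj : Disjoint A B := by
    rw [Set.disjoint_left]
    intro p hpA hpB
    have := hBneg p hpB
    have := hpA.2
    simp only [Set.mem_setOf_eq] at this
    linarith
  have hne0 : ∀ p : ℝ × ℝ, p.1 ≠ 0 → p ≠ ((0:ℝ), (0:ℝ)) := by
    intro p h hc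
    rw [hc] at h
    exact h rfl
  have hunion : A ∪ B = S \ {((0:ℝ),(0:ℝ))} := by
    apply Set.Subset.antisymm
    · rintro p (hpA | hpB)
      · exact ⟨hpA.1, by simp only [Set.mem_singleton_iff]; exact hne0 p hpA.2.ne'⟩
      · obtain ⟨q, hqA, rfl⟩ := hpB
        refine ⟨(hσS q).mpr hqA.1, ?_⟩
        simp only [Set.mem_singleton_iff]
        apply hne0
        simp only [hσ]
        have := hqA.2
        simp only [Set.mem_setOf_eq] at this
        simpa using this.ne'
    · rintro p ⟨hpS, hp0⟩
      simp only [Set.mem_singleton_iff] at hp0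
      have hx := hx_ne p hpS hp0
      rcases lt_or_gt_of_ne hx with hneg | hpos
      · right
        refine ⟨σ p, ⟨(hσS p).mpr hpS, ?_⟩, ?_⟩
        · simp only [hσ, Set.mem_setOf_eq]
          linarith
        · simp [hσ]
      · left
        exact ⟨hpS, hpos⟩
  -- the connected components
  have hcomp : ∀ p ∈ S \ {((0 : ℝ), (0 : ℝ))},
      connectedComponentIn (S \ {((0:ℝ), (0:ℝ))}) p = A ∨
      connectedComponentIn (S \ {((0:ℝ), (0:ℝ))}) p = B := by
    intro p hp
    set F := S \ {((0:ℝ), (0:ℝ))} with hF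
    set U : Set (ℝ × ℝ) := {q : ℝ × ℝ | 0 < q.1} with hU
    set V : Set (ℝ × ℝ) := {q : ℝ × ℝ | q.1 < 0} with hV
    have hUopen : IsOpen U := isOpen_lt continuous_const continuous_fst
    have hVopen : IsOpen V := isOpen_lt continuous_fst continuous_const
    have hUV : Disjoint U V := by
      rw [Set.disjoint_left]
      intro q hq1 hq2
      simp only [hU, hV, Set.mem_setOf_eq] at hq1 hq2
      linarith
    have hsubUV : connectedComponentIn F p ⊆ U ∪ V := by
      intro q hq'
      have hqF : q ∈ F := connectedComponentIn_subset F p hq'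
      rw [← hunion] at hqF
      rcases hqF with h | h
      · exact Or.inl h.2
      · exact Or.inr (hBneg q h)
    have hpF : p ∈ F := hp
    have hpmem : p ∈ connectedComponentIn F p := mem_connectedComponentIn hpF
    have hAU : A ⊆ U := fun q hq' => hq'.2
    have hBV : B ⊆ V := fun q hq' => hBneg q hq'
    rw [← hunion] at hpF
    rcases hpF with hpA | hpB
    · left
      apply Set.Subset.antisymm
      · -- component ⊆ A
        have hCU : connectedComponentIn F p ⊆ U :=
          IsPreconnected.subset_left_of_subset_union hUopen hVopen hUV hsubUV
            ⟨p, hpmem, hpA.2⟩ isPreconnected_connectedComponentIn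
        intro q hq'
        have hqF : q ∈ F := connectedComponentIn_subset F p hq'
        rw [← hunion] at hqF
        rcases hqF with h | h
        · exact h
        · exact absurd (hCU hq') (by simpa [hU] using not_lt.mpr (hBneg q h).le)
      · exact IsPreconnected.subset_connectedComponentIn hAconn.isPreconnected hpA
          (by rw [← hunion]; exact Set.subset_union_left)
    · right
      apply Set.Subset.antisymm
      · have hCV : connectedComponentIn F p ⊆ V := by
          apply IsPreconnected.subset_left_of_subset_union hVopen hUopen hUV.symm
            (by intro q hq'; rcases hsubUV hq' with h | h; exacts [Or.inr h, Or.inl h])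
            ⟨p, hpmem, hBneg p hpB⟩ isPreconnected_connectedComponentIn
        intro q hq'
        have hqF : q ∈ F := connectedComponentIn_subset F p hq'
        rw [← hunion] at hqF
        rcases hqF with h | h
        · exact absurd (hCV hq') (by simpa [hV] using not_lt.mpr h.2.le)
        · exact h
      · exact IsPreconnected.subset_connectedComponentIn hBconn.isPreconnected hpB
          (by rw [← hunion]; exact Set.subset_union_right)
  exact ⟨hScomp, horig, A, B, hAconn, hBconn, hdisj, hunion, hcomp, rfl⟩
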